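/- Let X be a complex Banach space and L(X) the Banach algebra of bounded linear operators on X. Suppose A, D ∈ L(X) have Hirano inverses and let A^H denote the Hirano inverse of A. If CB = 0, CA = 0 and A^H B C = 0, then the operator matrix M = [[A, B], [C, D]] has a Hirano inverse in M₂(L(X)). -/

import Mathlib

/-- `a` has a Hirano inverse: there exists `z` with `az = za`, `z = zaz`,
and `a^2 - az` nilpotent. -/
def HasHiranoInverse {R : Type*} [Ring R] (a : R) : Prop :=
  ∃ z : R, a * z = z * a ∧ z = z * a * z ∧ IsNilpotent (a ^ 2 - a * z)

/-- `a` has a strongly Drazin inverse: there exists `z` with `az = za`, `z = zaz`,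
and `a - az` nilpotent. -/
def HasStronglyDrazinInverse {R : Type*} [Ring R] (a : R) : Prop :=
  ∃ z : R, a * z = z * a ∧ z = z * a * z ∧ IsNilpotent (a - a * z)

open Finset Polynomial

section Auxiliary

/-- In a commutative ring, universal identities underlying the construction of the
Hirano inverse of an element `a` with `(a - a^3)` nilpotent (of index at most `m`). -/
lemma comm_key_aux {R : Type*} [CommRing R] (a : R) (m : ℕ) :
    ∃ W₁ W₂ : R,
      (a * (a^2)^m * (∑ i ∈ range m, (1 - a^2)^i)^(m+1)) * a *
        (a * (a^2)^m * (∑ i ∈ range m, (1 - a^2)^i)^(m+1)) -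
        (a * (a^2)^m * (∑ i ∈ range m, (1 - a^2)^i)^(m+1))
        = W₁ * ((a^2)^m * (1 - a^2)^m) ∧
      (a^2 - a * (a * (a^2)^m * (∑ i ∈ range m, (1 - a^2)^i)^(m+1)))^(m+1)
        = W₂ * ((a^2)^m * (1 - a^2)^m) := by
  set s : R := ∑ i ∈ range m, (1 - a^2)^i with hs
  set q : R := ∑ i ∈ range (m+1), (a^2 * s)^i with hq
  have h1 : s * ((1 - a^2) - 1) = (1 - a^2)^m - 1 := geom_sum_mul _ m
  have h2 : q * (a^2 * s - 1) = (a^2 * s)^(m+1) - 1 := geom_sum_mul _ (m+1)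
  have hT : a^2 * s - 1 = -(1 - a^2)^m := by linear_combination -h1
  have hE1 : (a^2 * s)^(m+1) - 1 = -(q * (1 - a^2)^m) := by
    linear_combination (-1 : R) * h2 + q * hT
  have hEE : (a^2*s)^(m+1) * (a^2*s)^(m+1) - (a^2*s)^(m+1)
      = (-(a^2 * s^(m+1) * q)) * ((a^2)^m * (1 - a^2)^m) := by
    linear_combination ((a^2*s)^(m+1)) * hE1
  have hBE : (a^2)^(m+1) * (1 - (a^2*s)^(m+1)) = (a^2 * q) * ((a^2)^m * (1 - a^2)^m) := by
    linear_combination (-((a^2)^(m+1))) * hE1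
  have hneg : (a^2 - 1 : R)^m = (-1)^m * (1 - a^2)^m := by
    rw [show (a^2 - 1 : R) = -(1 - a^2) by ring, neg_pow]
  have hNE : (a^2 - 1)^m * (a^2*s)^(m+1)
      = ((-1 : R)^m * (a^2 * s^(m+1))) * ((a^2)^m * (1 - a^2)^m) := by
    linear_combination ((a^2*s)^(m+1)) * hneg
  have ind : ∀ k : ℕ, ∃ w : R, (a^2 - (a^2*s)^(m+1))^k
      = (a^2 - 1)^k * (a^2*s)^(m+1) + (a^2)^k * (1 - (a^2*s)^(m+1))
        + w * ((a^2)^m * (1 - a^2)^m) := by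
    intro k
    induction k with
    | zero => exact ⟨0, by ring⟩
    | succ k ih =>
      obtain ⟨w, hw⟩ := ih
      refine ⟨-(a^2-1)^k * (-(a^2 * s^(m+1) * q)) + (a^2)^k * (-(a^2 * s^(m+1) * q))
        + (a^2 - (a^2*s)^(m+1)) * w, ?_⟩
      have expand : (a^2 - (a^2*s)^(m+1))^(k+1)
          = (a^2 - (a^2*s)^(m+1)) * (a^2 - (a^2*s)^(m+1))^k := by ring
      rw [expand, hw]
      linear_combination ((a^2)^k - (a^2-1)^k) * hEE
  obtain ⟨w, hw⟩ := ind (m+1)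
  refine ⟨-(a * s^(m+1) * q),
    (a^2 - 1) * ((-1 : R)^m * (a^2 * s^(m+1))) + a^2 * q + w, ?_, ?_⟩
  · linear_combination (a * (a^2)^m * s^(m+1)) * hE1
  · calc (a^2 - a * (a * (a^2)^m * s^(m+1)))^(m+1)
        = (a^2 - (a^2*s)^(m+1))^(m+1) := by
          rw [show a^2 - a * (a * (a^2)^m * s^(m+1)) = a^2 - (a^2*s)^(m+1) by ring]
      _ = _ := by
          rw [hw]
          linear_combination (a^2 - 1) * hNE + hBE

/-- If `a` has a Hirano inverse then `a - a^3` is nilpotent. -/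
lemma nilpotent_of_hirano {R : Type*} [Ring R] {a z : R}
    (h1 : a * z = z * a) (h2 : z = z * a * z) (h3 : IsNilpotent (a ^ 2 - a * z)) :
    IsNilpotent (a - a^3) := by
  have hca : Commute a z := h1
  have he : (a*z) * (a*z) = a*z := by
    calc (a*z) * (a*z) = a * (z * a * z) := by rw [mul_assoc, ← mul_assoc z a z]
    _ = a * z := by rw [← h2]
  have heb : (a*z) * a^2 = a^2 * (a*z) :=
    (((Commute.refl a).mul_left hca.symm).pow_right 2).symm.eq.symm
  have key : (a^2 - a*z) * (1 - 2*(a*z) - (a^2 - a*z)) = a^2 - (a^2)^2 := by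
    have expand : (a^2 - a*z) * (1 - 2*(a*z) - (a^2 - a*z)) - (a^2 - (a^2)^2)
        = ((a*z)*a^2 - a^2*(a*z)) + ((a*z)*(a*z) - a*z) := by noncomm_ring
    have h0 : (a^2 - a*z) * (1 - 2*(a*z) - (a^2 - a*z)) - (a^2 - (a^2)^2) = 0 := by
      rw [expand, heb, he]; abel
    linear_combination (norm := noncomm_ring) h0
  have cwe : Commute (a^2 - a*z) (a*z) := Commute.sub_left heb.symm (Commute.refl _)
  have hcw : Commute (a^2 - a*z) (1 - 2*(a*z) - (a^2 - a*z)) := by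
    have c2 : Commute (a^2 - a*z) (2*(a*z)) :=
      Commute.mul_right (Commute.ofNat_right _ 2) cwe
    exact (((Commute.one_right _).sub_right c2).sub_right (Commute.refl _))
  have hb2 : IsNilpotent (a^2 - (a^2)^2) := by
    rw [← key]; exact hcw.isNilpotent_mul_right h3
  have hsq : (a - a^3)^2 = (a^2 - (a^2)^2) * (1 - a^2) := by noncomm_ring
  have hcomm2 : Commute (a^2 - (a^2)^2) (1 - a^2) := by
    have : Commute (a^2 - (a^2)^2) (a^2) :=
      Commute.sub_left (Commute.refl _) ((Commute.refl _).pow_left 2)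
    exact (Commute.one_right _).sub_right this
  have hfin : IsNilpotent ((a - a^3)^2) := by
    rw [hsq]; exact hcomm2.isNilpotent_mul_right hb2
  obtain ⟨k, hk⟩ := hfin
  exact ⟨2*k, by rw [pow_mul, hk]⟩

/-- If `a - a^3` is nilpotent then `a` has a Hirano inverse. -/
lemma hirano_of_nilpotent {R : Type*} [Ring R] {a : R}
    (h : IsNilpotent (a - a^3)) : HasHiranoInverse a := by
  obtain ⟨n, hn⟩ := h
  have hg : (a^2)^n * (1 - a^2)^n = 0 := by
    have c1 : Commute (a^2) (1 - a^2) :=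
      (Commute.one_right (a^2)).sub_right (Commute.refl (a^2))
    have c2 : Commute a (a - a^3) :=
      (Commute.refl a).sub_right ((Commute.refl a).pow_right 3)
    have e1 : a^2 * (1 - a^2) = a * (a - a^3) := by noncomm_ring
    calc (a^2)^n * (1 - a^2)^n = (a^2 * (1 - a^2))^n := (c1.mul_pow n).symm
      _ = (a * (a - a^3))^n := by rw [e1]
      _ = a^n * (a - a^3)^n := c2.mul_pow n
      _ = 0 := by rw [hn, mul_zero]
  obtain ⟨W₁, W₂, hc1, hc2⟩ := comm_key_aux (R := Polynomial ℤ) X n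
  set Zp : Polynomial ℤ := X * (X^2)^n * (∑ i ∈ range n, (1 - X^2)^i)^(n+1) with hZp
  set z : R := a * (a^2)^n * (∑ i ∈ range n, (1 - a^2)^i)^(n+1) with hz
  have hφz : aeval a Zp = z := by
    simp only [hZp, hz, map_mul, map_pow, map_sub, map_one, map_sum, aeval_X]
  refine ⟨z, ?_, ?_, ?_⟩
  · calc a * z = aeval a (X * Zp) := by rw [map_mul, aeval_X, hφz]
      _ = aeval a (Zp * X) := by rw [mul_comm]
      _ = z * a := by rw [map_mul, aeval_X, hφz]
  · have e := congrArg (aeval a (R := ℤ)) hc1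
    simp only [map_mul, map_sub, map_pow, map_one, aeval_X] at e
    rw [hφz, hg, mul_zero] at e
    exact (sub_eq_zero.mp e).symm
  · have e := congrArg (aeval a (R := ℤ)) hc2
    simp only [map_mul, map_sub, map_pow, map_one, aeval_X] at e
    rw [hφz, hg, mul_zero] at e
    exact ⟨n+1, e⟩

/-- Sum of nilpotents is nilpotent when the product in one order vanishes. -/
lemma isNilpotent_add_of_mul_eq_zero {R : Type*} [Ring R] {x y : R}
    (h : y * x = 0) (hx : IsNilpotent x) (hy : IsNilpotent y) : IsNilpotent (x + y) := by
  obtain ⟨p, hp⟩ := hx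
  obtain ⟨q, hq⟩ := hy
  have hyx : ∀ k, 1 ≤ k → y * x ^ k = 0 := by
    intro k hk
    have e : x ^ k = x * x ^ (k - 1) := by
      rw [← pow_succ']
      congr 1
      omega
    rw [e, ← mul_assoc, h, zero_mul]
  have key : ∀ n, (x + y) ^ n = ∑ i ∈ range (n+1), x ^ (n - i) * y ^ i := by
    intro n
    induction n with
    | zero => simp
    | succ n ih =>
      rw [pow_succ', ih, mul_sum]
      have split : ∀ i ∈ range (n+1), (x + y) * (x ^ (n - i) * y ^ i)
          = x ^ (n + 1 - i) * y ^ i + y * x ^ (n - i) * y ^ i := by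
        intro i hi
        rw [add_mul]
        congr 1
        · rw [← mul_assoc, ← pow_succ', Nat.succ_sub (Nat.lt_succ_iff.mp (mem_range.mp hi))]
        · rw [mul_assoc]
      rw [sum_congr rfl split, sum_add_distrib]
      have h2 : ∑ i ∈ range (n+1), y * x ^ (n - i) * y ^ i = y ^ (n+1) := by
        rw [sum_range_succ]
        have hz : ∀ i ∈ range n, y * x ^ (n - i) * y ^ i = 0 := by
          intro i hi
          have : 1 ≤ n - i := by have := mem_range.mp hi; omega
          rw [hyx (n - i) this, zero_mul]
        rw [sum_eq_zero hz, zero_add, Nat.sub_self, pow_zero, mul_one, ← pow_succ']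
      rw [h2, sum_range_succ (fun i => x ^ (n + 1 - i) * y ^ i) (n+1)]
      simp
  refine ⟨p + q, ?_⟩
  rw [key]
  apply sum_eq_zero
  intro i hi
  rcases le_or_gt q i with h' | h'
  · rw [show y ^ i = y ^ q * y ^ (i - q) by rw [← pow_add]; congr 1; omega, hq, zero_mul,
      mul_zero]
  · rw [show x ^ (p + q - i) = x ^ p * x ^ (p + q - i - p) by
      rw [← pow_add]; congr 1; omega, hp, zero_mul, zero_mul]

/-- An upper triangular 2×2 matrix with nilpotent diagonal entries is nilpotent. -/
lemma nilpotent_triangular {R : Type*} [Ring R] {a d : R} (x : R)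
    (ha : IsNilpotent a) (hd : IsNilpotent d) :
    IsNilpotent (!![a, x; 0, d] : Matrix (Fin 2) (Fin 2) R) := by
  obtain ⟨p, hp⟩ := ha
  obtain ⟨q, hq⟩ := hd
  have hU : ∀ k, (!![a, x; 0, 0] : Matrix (Fin 2) (Fin 2) R) ^ (k+1)
      = !![a^(k+1), a^k * x; 0, 0] := by
    intro k
    induction k with
    | zero => simp
    | succ k ih =>
      rw [pow_succ, ih, Matrix.mul_fin_two]
      ext i j
      fin_cases i <;> fin_cases j <;> simp [pow_succ, mul_assoc]
  have hV : ∀ k, (!![0, 0; 0, d] : Matrix (Fin 2) (Fin 2) R) ^ (k+1)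
      = !![0, 0; 0, d^(k+1)] := by
    intro k
    induction k with
    | zero => simp
    | succ k ih =>
      rw [pow_succ, ih, Matrix.mul_fin_two]
      ext i j
      fin_cases i <;> fin_cases j <;> simp [pow_succ]
  have hsum : (!![a, x; 0, d] : Matrix (Fin 2) (Fin 2) R) = !![a, x; 0, 0] + !![0, 0; 0, d] := by
    ext i j
    fin_cases i <;> fin_cases j <;> simp
  have hmul : (!![0, 0; 0, d] : Matrix (Fin 2) (Fin 2) R) * !![a, x; 0, 0] = 0 := by
    rw [Matrix.mul_fin_two]
    ext i j
    fin_cases i <;> fin_cases j <;> simp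
  rw [hsum]
  refine isNilpotent_add_of_mul_eq_zero hmul ⟨p+1, ?_⟩ ⟨q+1, ?_⟩
  · rw [hU]
    ext i j
    fin_cases i <;> fin_cases j <;> simp [pow_succ, hp]
  · rw [hV]
    ext i j
    fin_cases i <;> fin_cases j <;> simp [pow_succ, hq]

/-- The key matrix computation: `M - M^3` is nilpotent for the anti-triangular-perturbed
matrix under the vanishing hypotheses. -/
lemma matrix_sub_cube_nilpotent {R : Type*} [Ring R] {a b c d : R}
    (hA : IsNilpotent (a - a^3)) (hD : IsNilpotent (d - d^3))
    (h1 : c * b = 0) (h2 : c * a = 0) :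
    IsNilpotent ((!![a, b; c, d] : Matrix (Fin 2) (Fin 2) R)
      - (!![a, b; c, d] : Matrix (Fin 2) (Fin 2) R)^3) := by
  set M : Matrix (Fin 2) (Fin 2) R := !![a, b; c, d] with hMdef
  set P : Matrix (Fin 2) (Fin 2) R := !![a, b; 0, d] with hPdef
  set Q : Matrix (Fin 2) (Fin 2) R := !![0, 0; c, 0] with hQdef
  have hQP : Q * P = 0 := by
    rw [hQdef, hPdef, Matrix.mul_fin_two]
    ext i j
    fin_cases i <;> fin_cases j <;> simp [h1, h2]
  have hQ2 : Q * Q = 0 := by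
    rw [hQdef, Matrix.mul_fin_two]
    ext i j
    fin_cases i <;> fin_cases j <;> simp
  have hM : M = P + Q := by
    rw [hMdef, hPdef, hQdef]
    ext i j
    fin_cases i <;> fin_cases j <;> simp
  have hM2 : M * M = P * P + P * Q := by
    rw [hM, add_mul, mul_add, mul_add, hQP, hQ2, add_zero, add_zero]
  have hM3 : M * M * M = P * P * P + P * P * Q := by
    rw [hM2, hM, add_mul, mul_add, mul_add]
    have e1 : P * Q * P = 0 := by rw [mul_assoc, hQP, mul_zero]
    have e2 : P * Q * Q = 0 := by rw [mul_assoc, hQ2, mul_zero]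
    rw [e1, e2, add_zero, add_zero]
  have hdecomp : M - M^3 = (P - P * P * P) + (1 - P * P) * Q := by
    rw [show M^3 = M * M * M by rw [pow_succ, pow_succ, pow_one], hM3, hM]
    noncomm_ring
  -- α is nilpotent via triangularity
  have hP2 : P * P = !![a*a, a*b + b*d; 0, d*d] := by
    rw [hPdef, Matrix.mul_fin_two]
    ext i j
    fin_cases i <;> fin_cases j <;> simp
  have hP3 : P * P * P = !![a*a*a, a*a*b + (a*b + b*d)*d; 0, d*d*d] := by
    rw [hP2, hPdef, Matrix.mul_fin_two]
    ext i j
    fin_cases i <;> fin_cases j <;> simp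
  have hα : IsNilpotent (P - P * P * P) := by
    have hPdiff : P - P * P * P
        = !![a - a*a*a, b - (a*a*b + (a*b + b*d)*d); 0, d - d*d*d] := by
      rw [hP3, hPdef]
      ext i j
      fin_cases i <;> fin_cases j <;> simp
    rw [hPdiff]
    refine nilpotent_triangular _ ?_ ?_
    · rw [show a - a*a*a = a - a^3 by noncomm_ring]; exact hA
    · rw [show d - d*d*d = d - d^3 by noncomm_ring]; exact hD
  -- β squares to zero
  have hQ1 : Q * (1 - P * P) = Q := by
    rw [mul_sub, mul_one, ← mul_assoc, hQP, zero_mul, sub_zero]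
  have hβ2 : ((1 - P * P) * Q) * ((1 - P * P) * Q) = 0 := by
    rw [mul_assoc, ← mul_assoc Q, hQ1, hQ2, mul_zero]
  have hβα : ((1 - P * P) * Q) * (P - P * P * P) = 0 := by
    rw [mul_assoc]
    have e : Q * (P - P * P * P) = 0 := by
      rw [mul_sub, hQP, ← mul_assoc, ← mul_assoc, hQP, zero_mul, zero_mul, sub_zero]
    rw [e, mul_zero]
  rw [hdecomp]
  exact isNilpotent_add_of_mul_eq_zero hβα hα ⟨2, by rw [pow_two, hβ2]⟩

end Auxiliary

variable {X : Type*} [NormedAddCommGroup X] [NormedSpace ℂ X] [CompleteSpace X]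

theorem hirano_matrix_cor38 (A B C D AH : X →L[ℂ] X)
    (hAH : A * AH = AH * A ∧ AH = AH * A * AH ∧ IsNilpotent (A ^ 2 - A * AH))
    (hD : HasHiranoInverse D)
    (h1 : C * B = 0)
    (h2 : C * A = 0)
    (h3 : AH * B * C = 0) :
    HasHiranoInverse (!![A, B; C, D] : Matrix (Fin 2) (Fin 2) (X →L[ℂ] X)) := by
  obtain ⟨hA1, hA2, hA3⟩ := hAH
  have hAnil : IsNilpotent (A - A^3) := nilpotent_of_hirano hA1 hA2 hA3
  obtain ⟨zD, hD1, hD2, hD3⟩ := hD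
  have hDnil : IsNilpotent (D - D^3) := nilpotent_of_hirano hD1 hD2 hD3
  exact hirano_of_nilpotent (matrix_sub_cube_nilpotent hAnil hDnil h1 h2)
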